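/- If X* ⊂ ℝ^M is the image of a continuous map φ: Δ^{M-1} → ℝ^M, then there exists a sequence of Bézier simplices b^(i) with images B^(i) = b^(i)(Δ^{M-1}) such that the Hausdorff distance d_H(X*, B^(i)) converges to 0. -/

import Mathlib

noncomputable def bezierMap (M D : ℕ) (p : (Fin M → ℕ) → (Fin M → ℝ)) (t : Fin M → ℝ) :
    Fin M → ℝ :=
  ∑ d ∈ Finset.Nat.antidiagonalTuple M D,
    ((Nat.multinomial Finset.univ d : ℝ) * ∏ i, t i ^ d i) • p d

open Finset

/-- `f` is representable in the degree-`D` Bernstein basis on the standard simplex. -/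
def BernRep (M D : ℕ) (f : (Fin M → ℝ) → ℝ) : Prop :=
  ∃ c : (Fin M → ℕ) → ℝ, ∀ t ∈ stdSimplex ℝ (Fin M),
    f t = ∑ d ∈ Finset.Nat.antidiagonalTuple M D,
      (Nat.multinomial Finset.univ d : ℝ) * (∏ i, t i ^ d i) * c d

lemma BernRep.add {M D f g} (hf : BernRep M D f) (hg : BernRep M D g) :
    BernRep M D (fun t => f t + g t) := by
  obtain ⟨c, hc⟩ := hf; obtain ⟨c', hc'⟩ := hg
  refine ⟨fun d => c d + c' d, fun t ht => ?_⟩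
  simp [hc t ht, hc' t ht, mul_add, Finset.sum_add_distrib]

lemma BernRep.zero {M D} : BernRep M D (fun _ => 0) :=
  ⟨fun _ => 0, fun t _ => by simp⟩

lemma BernRep.smul {M D f} (a : ℝ) (hf : BernRep M D f) :
    BernRep M D (fun t => a * f t) := by
  obtain ⟨c, hc⟩ := hf
  refine ⟨fun d => a * c d, fun t ht => ?_⟩
  show a * f t = _
  rw [hc t ht, Finset.mul_sum]
  exact Finset.sum_congr rfl fun d _ => by ring

lemma BernRep.sum {M D} {ι : Type*} (s : Finset ι) (f : ι → (Fin M → ℝ) → ℝ)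
    (h : ∀ i ∈ s, BernRep M D (f i)) : BernRep M D (fun t => ∑ i ∈ s, f i t) := by
  classical
  induction s using Finset.induction with
  | empty => simpa using BernRep.zero
  | insert _ _ hx ih =>
    rename_i x s
    simp only [Finset.sum_insert hx]
    exact (h x (Finset.mem_insert_self x s)).add
      (ih fun i hi => h i (Finset.mem_insert_of_mem hi))

lemma bernRep_monomial (M D : ℕ) : ∀ k (a : Fin M → ℕ), (∑ i, a i) + k = D →
    BernRep M D (fun t => ∏ i, t i ^ a i) := by
  intro k
  induction k with
  | zero =>
    intro a ha
    rw [Nat.add_zero] at ha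
    classical
    refine ⟨fun d => if d = a then ((Nat.multinomial Finset.univ a : ℝ))⁻¹ else 0,
      fun t ht => ?_⟩
    rw [Finset.sum_eq_single a]
    · have h0 : (Nat.multinomial Finset.univ a : ℝ) ≠ 0 := by
        exact_mod_cast (Nat.multinomial_pos _ _).ne'
      simp only [if_pos]
      field_simp
    · intro d _ hd; simp [hd]
    · intro h; exact absurd (Finset.Nat.mem_antidiagonalTuple.mpr ha) h
  | succ k ih =>
    intro a ha
    classical
    have key : ∀ t ∈ stdSimplex ℝ (Fin M),
        (∏ i, t i ^ a i) = ∑ j, ∏ i, t i ^ (a i + if i = j then 1 else 0) := by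
      intro t ht
      have h1 : (∑ j, t j) = 1 := ht.2
      calc (∏ i, t i ^ a i) = (∑ j, t j) * ∏ i, t i ^ a i := by rw [h1, one_mul]
        _ = ∑ j, t j * ∏ i, t i ^ a i := by rw [Finset.sum_mul]
        _ = ∑ j, ∏ i, t i ^ (a i + if i = j then 1 else 0) := by
            refine Finset.sum_congr rfl fun j _ => ?_
            have h2 : (∏ i, t i ^ (if i = j then 1 else 0)) = t j := by
              rw [Finset.prod_eq_single j (fun i _ hij => by simp [hij]) (by simp)]
              simp
            rw [Finset.prod_congr rfl (fun i (_ : i ∈ Finset.univ) => pow_add (t i) (a i) _),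
              Finset.prod_mul_distrib, h2, mul_comm]
    have hrep : BernRep M D (fun t => ∑ j, ∏ i, t i ^ (a i + if i = j then 1 else 0)) := by
      refine BernRep.sum Finset.univ _ fun j _ => ih (fun i => a i + if i = j then 1 else 0) ?_
      have h3 : (∑ i, ((fun i => a i + if i = j then 1 else 0) i)) = (∑ i, a i) + 1 := by
        simp [Finset.sum_add_distrib]
      beta_reduce at h3
      omega
    obtain ⟨c, hc⟩ := hrep
    exact ⟨c, fun t ht => (key t ht).trans (hc t ht)⟩

lemma bernRep_poly (M D : ℕ) (q : MvPolynomial (Fin M) ℝ) (hD : q.totalDegree ≤ D) :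
    BernRep M D (fun t => MvPolynomial.eval t q) := by
  classical
  have key : BernRep M D
      (fun t => ∑ a ∈ q.support, MvPolynomial.coeff a q * ∏ i, t i ^ a i) := by
    refine BernRep.sum _ _ fun a ha => BernRep.smul _ ?_
    have h1 : (∑ i, a i) ≤ q.totalDegree := by
      have := MvPolynomial.le_totalDegree ha
      rwa [Finsupp.sum_fintype _ _ (fun _ => rfl)] at this
    exact bernRep_monomial M D (D - ∑ i, a i) (fun i => a i)
      (by simpa using (by omega : (∑ i, a i) + (D - ∑ i, a i) = D))
  obtain ⟨c, hc⟩ := key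
  refine ⟨c, fun t ht => ?_⟩
  show (MvPolynomial.eval t) q = _
  rw [MvPolynomial.eval_eq']
  exact hc t ht

lemma exists_poly_near (M : ℕ) (f : (Fin M → ℝ) → ℝ)
    (hf : ContinuousOn f (stdSimplex ℝ (Fin M))) (ε : ℝ) (hε : 0 < ε) :
    ∃ q : MvPolynomial (Fin M) ℝ, ∀ t ∈ stdSimplex ℝ (Fin M),
      |MvPolynomial.eval t q - f t| ≤ ε := by
  classical
  haveI : CompactSpace (stdSimplex ℝ (Fin M)) :=
    isCompact_iff_compactSpace.mp (isCompact_stdSimplex ℝ (Fin M))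
  set X := stdSimplex ℝ (Fin M) with hX
  let coord : Fin M → C(X, ℝ) := fun i => ⟨fun x => (x : Fin M → ℝ) i, by
    exact (continuous_apply i).comp continuous_subtype_val⟩
  let E : MvPolynomial (Fin M) ℝ →ₐ[ℝ] C(X, ℝ) := MvPolynomial.aeval coord
  have hEval : ∀ (q : MvPolynomial (Fin M) ℝ) (x : X),
      (E q) x = MvPolynomial.eval (x : Fin M → ℝ) q := by
    intro q x
    have h1 : (ContinuousMap.evalAlgHom ℝ ℝ x).comp E =
        MvPolynomial.aeval (fun i => (coord i) x) := by
      apply MvPolynomial.algHom_ext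
      intro i
      simp [E]
    have h2 := congrArg (fun ψ => ψ q) h1
    simp only [AlgHom.comp_apply] at h2
    have h3 : (ContinuousMap.evalAlgHom ℝ ℝ x) (E q) = (E q) x := rfl
    rw [h3] at h2
    rw [h2, MvPolynomial.aeval_def]
    have : (fun i => (coord i) x) = (fun i => (x : Fin M → ℝ) i) := rfl
    rw [this]
    rw [Algebra.algebraMap_self]
    rfl
  have hsep : (E.range : Subalgebra ℝ C(X, ℝ)).SeparatesPoints := by
    intro x y hxy
    have hne : ∃ i, (x : Fin M → ℝ) i ≠ (y : Fin M → ℝ) i := by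
      by_contra h
      push_neg at h
      exact hxy (Subtype.ext (funext h))
    obtain ⟨i, hi⟩ := hne
    refine ⟨coord i, ⟨E (MvPolynomial.X i), ⟨MvPolynomial.X i, rfl⟩, by simp [E]⟩, hi⟩
  obtain ⟨⟨g, hgmem⟩, hg⟩ :=
    ContinuousMap.exists_mem_subalgebra_near_continuous_of_separatesPoints E.range hsep
      (fun x : X => f x) hf.restrict ε hε
  obtain ⟨q, hq⟩ := hgmem
  have hq' : E q = g := hq
  refine ⟨q, fun t ht => ?_⟩
  have h4 : g ⟨t, ht⟩ = (MvPolynomial.eval t) q := by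
    rw [← hq']
    exact hEval q ⟨t, ht⟩
  have h6 := (hg ⟨t, ht⟩).le
  exact (by simpa [Real.norm_eq_abs, h4] using h6 :
    |(MvPolynomial.eval t) q - f ((⟨t, ht⟩ : X) : Fin M → ℝ)| ≤ ε)

lemma main_step (M : ℕ) (φ : (Fin M → ℝ) → (Fin M → ℝ))
    (hφ : ContinuousOn φ (stdSimplex ℝ (Fin M))) (ε : ℝ) (hε : 0 < ε) :
    ∃ (D : ℕ) (p : (Fin M → ℕ) → (Fin M → ℝ)),
      Metric.hausdorffDist (φ '' stdSimplex ℝ (Fin M))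
        (bezierMap M D p '' stdSimplex ℝ (Fin M)) ≤ ε := by
  classical
  choose q hq using fun j : Fin M => exists_poly_near M (fun t => φ t j)
    ((continuous_apply j).comp_continuousOn hφ) ε hε
  set D := Finset.univ.sup fun j => (q j).totalDegree with hD
  choose c hc using fun j : Fin M =>
    bernRep_poly M D (q j) (Finset.le_sup (f := fun j => (q j).totalDegree) (Finset.mem_univ j))
  refine ⟨D, fun d j => c j d, ?_⟩
  have key : ∀ t ∈ stdSimplex ℝ (Fin M),
      dist (φ t) (bezierMap M D (fun d j => c j d) t) ≤ ε := by
    intro t ht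
    rw [dist_pi_le_iff hε.le]
    intro j
    have hb : bezierMap M D (fun d j => c j d) t j = MvPolynomial.eval t (q j) := by
      simp only [bezierMap, Finset.sum_apply, Pi.smul_apply, smul_eq_mul]
      exact (hc j t ht).symm
    rw [Real.dist_eq, hb, abs_sub_comm]
    exact hq j t ht
  refine Metric.hausdorffDist_le_of_mem_dist hε.le ?_ ?_
  · rintro x ⟨t, ht, rfl⟩
    exact ⟨bezierMap M D (fun d j => c j d) t, Set.mem_image_of_mem _ ht, key t ht⟩
  · rintro y ⟨t, ht, rfl⟩
    exact ⟨φ t, Set.mem_image_of_mem _ ht, (by rw [dist_comm]; exact key t ht)⟩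

/-- The image of a continuous map on the simplex is approximated in Hausdorff distance
by images of Bézier simplices. -/
theorem bezier_simplex_hausdorff_approximation (M : ℕ) (φ : (Fin M → ℝ) → (Fin M → ℝ))
    (hφ : ContinuousOn φ (stdSimplex ℝ (Fin M))) :
    ∃ (Dseq : ℕ → ℕ) (pseq : ℕ → (Fin M → ℕ) → (Fin M → ℝ)),
      Filter.Tendsto
        (fun i => Metric.hausdorffDist (φ '' stdSimplex ℝ (Fin M))
          (bezierMap M (Dseq i) (pseq i) '' stdSimplex ℝ (Fin M)))
        Filter.atTop (nhds 0) := by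
  have h : ∀ i : ℕ, ∃ (D : ℕ) (p : (Fin M → ℕ) → (Fin M → ℝ)),
      Metric.hausdorffDist (φ '' stdSimplex ℝ (Fin M))
        (bezierMap M D p '' stdSimplex ℝ (Fin M)) ≤ 1 / (i + 1) := fun i =>
    main_step M φ hφ (1 / (i + 1)) (by positivity)
  choose Dseq pseq hseq using h
  exact ⟨Dseq, pseq, squeeze_zero (fun i => Metric.hausdorffDist_nonneg) hseq
    tendsto_one_div_add_atTop_nhds_zero_nat⟩
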